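/- In the polynomial ring ℂ[p₁,p₂,t], for each i = 0, 1, 2, the polynomial t² divides uᵢ(1, 0, −1, −1+p₂·t, p₁·t, 1+t) − t·νᵢ, where ν = (ν₀, ν₁, ν₂) = (−2p₁, p₂ − 1, 2p₁ − p₂ − 1). Moreover, the linear map ℂ³ → ℂ³ sending (p₀, p₁, p₂) to (−2p₁, −p₀ + p₂, −p₀ + 2p₁ − p₂) has nonzero determinant (equal to 4), hence is invertible. (This is the (2,2,2) case for the symbol pattern [x y z; x y z]: the limiting Pascal line depends on the blow-up direction (p₁, p₂) through an invertible linear change of coordinates, so the image of the exceptional ℙ² is all of the dual plane.) -/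

import Mathlib

open MvPolynomial Matrix

namespace Pascal222Full

noncomputable section

/-- The coordinates `(u₀, u₁, u₂)` of the Pascal line of the array
`[τ a, τ b, τ c; τ f, τ e, τ d]`, over any commutative ring. -/
def u {R : Type*} [CommRing R] (a b c d e f : R) : Fin 3 → R :=
  ![a*b*d*e - a*b*d*f - a*c*d*e + a*c*e*f + b*c*d*f - b*c*e*f,
    -(a*b*e) + a*b*f + a*c*d - a*c*f + a*d*f - a*e*f - b*c*d + b*c*e - b*d*e + b*e*f + c*d*e - c*d*f,
    -(a*d) + a*e + b*d - b*f - c*e + c*f]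

/-- The variables `p₁, p₂, t` of the polynomial ring `ℂ[p₁,p₂,t]`. -/
def p1 : MvPolynomial (Fin 3) ℂ := X 0
def p2 : MvPolynomial (Fin 3) ℂ := X 1
def t : MvPolynomial (Fin 3) ℂ := X 2

/-- The matrix of the linear map `(p₀, p₁, p₂) ↦ (-2p₁, -p₀ + p₂, -p₀ + 2p₁ - p₂)`. -/
def M : Matrix (Fin 3) (Fin 3) ℂ := !![0, -2, 0; -1, 0, 1; -1, 2, -1]

/-- The `(2,2,2)` case, symbol pattern `[x y z; x y z]`: after the substitution
`a = 1`, `b = 0`, `c = -1`, `f = 1 + t`, `e = p₁t`, `d = -1 + p₂t` (blowing up the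
polydiagonal `f = a, e = b, d = c`), each `uᵢ` is divisible by `t` and modulo `t²`
the quotient is `ν = (-2p₁, p₂ - 1, 2p₁ - p₂ - 1)`.  Moreover, the linear map
`(p₀, p₁, p₂) ↦ (-2p₁, -p₀ + p₂, -p₀ + 2p₁ - p₂)` has determinant `4 ≠ 0`, hence is
invertible: the limiting Pascal line depends on the blow-up direction through an
invertible linear change of coordinates, so the image of the exceptional `ℙ²` is all
of the dual plane. -/
theorem pascal_222_full_image :
    (∀ i : Fin 3,
      t ^ 2 ∣ u 1 0 (-1) (-1 + p2 * t) (p1 * t) (1 + t) i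
        - t * (![-(2 * p1), p2 - 1, 2 * p1 - p2 - 1] i)) ∧
    (∀ v : Fin 3 → ℂ, M.mulVec v = ![-2 * v 1, -(v 0) + v 2, -(v 0) + 2 * v 1 - v 2]) ∧
    M.det = 4 ∧ M.det ≠ 0 ∧ IsUnit M := by
  refine ⟨?_, ?_, ?_, ?_, ?_⟩
  · intro i
    fin_cases i
    · exact ⟨p1 * p2 - p1, by simp [u]; ring⟩
    · exact ⟨2 * p2 - p1 - p1 * p2, by simp [u]; ring⟩
    · exact ⟨0, by simp [u]; ring⟩
  · intro v
    funext i
    fin_cases i <;> simp [M, Matrix.mulVec, dotProduct, Fin.sum_univ_three] <;> ring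
  · norm_num [M, Matrix.det_succ_row_zero, Fin.sum_univ_succ, Matrix.cons_val_two]
  · norm_num [M, Matrix.det_succ_row_zero, Fin.sum_univ_succ, Matrix.cons_val_two]
  · rw [Matrix.isUnit_iff_isUnit_det]
    norm_num [M, Matrix.det_succ_row_zero, Fin.sum_univ_succ, Matrix.cons_val_two]

end

end Pascal222Full
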